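/- Let V be a real vector space with a symmetric bilinear form B. Let the vectors e_i be grouped into m disjoint chains, the j-th chain consisting of k_j vectors forming the A_{k_j} intersection matrix (B = −2 on each vector with itself, 1 between consecutive vectors of the same chain, 0 between all other pairs), so that the total Gram matrix is block diagonal with A_{k_j} blocks. Let c̃ ∈ V satisfy B(c̃, e) = 1 when e is the first vector of a chain and B(c̃, e) = 0 for all other e_i. If c = c̃ + Σ a_j e_j is the unique vector of this form with B(c, e_i) = 0 for all i, then B(c, c) = B(c̃, c̃) + Σ_{j=1}^{m} k_j/(k_j + 1). -/
import Mathlib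

lemma tri_sum (n : ℕ) (A : ℕ → ℝ) (hA : ∀ i, n ≤ i → A i = 0) (i : ℕ) (hi : i < n) :
    ∑ i' ∈ Finset.range n, A i' *
      (if i' = i then (-2:ℝ) else if (i + 1 = i' ∨ i' + 1 = i) then 1 else 0)
    = (if i = 0 then 0 else A (i-1)) - 2 * A i + A (i+1) := by
  have hsplit : ∀ i' ∈ Finset.range n, A i' *
      (if i' = i then (-2:ℝ) else if (i + 1 = i' ∨ i' + 1 = i) then 1 else 0)
      = (if i' = i then -2 * A i' else 0) + (if i' = i + 1 then A i' else 0)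
        + (if i' + 1 = i then A i' else 0) := by
    intro i' _
    split_ifs <;> first | (exfalso; omega) | ring
  rw [Finset.sum_congr rfl hsplit]
  rw [Finset.sum_add_distrib, Finset.sum_add_distrib]
  rw [Finset.sum_ite_eq' (Finset.range n) i (fun i' => -2 * A i'),
    Finset.sum_ite_eq' (Finset.range n) (i+1) A]
  have h1 : (if i ∈ Finset.range n then -2 * A i else 0) = -2 * A i := by
    simp [Finset.mem_range, hi]
  have h2 : (if i + 1 ∈ Finset.range n then A (i+1) else 0) = A (i+1) := by
    by_cases h : i + 1 < n
    · simp [Finset.mem_range, h]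
    · have h' := hA (i+1) (by omega)
      simp [Finset.mem_range, h, h']
  have h3 : (∑ i' ∈ Finset.range n, if i' + 1 = i then A i' else 0)
      = (if i = 0 then 0 else A (i-1)) := by
    rcases i with _ | t
    · simp
    · have : ∀ i', (i' + 1 = t + 1) = (i' = t) := by intro i'; simp
      simp only [this]
      rw [Finset.sum_ite_eq' (Finset.range n) t A]
      simp [Finset.mem_range]
      omega
  rw [h1, h2, h3]
  ring

/-- The `A_n` chain recurrence forces `A 0 = n / (n+1)`. -/
lemma chain_solve (n : ℕ) (hn : 0 < n) (A : ℕ → ℝ) (hA : ∀ i, n ≤ i → A i = 0)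
    (heq : ∀ i, i < n →
      (if i = 0 then (1:ℝ) else 0) + ((if i = 0 then 0 else A (i-1)) - 2 * A i + A (i+1)) = 0) :
    A 0 = n / (n + 1) := by
  have Q : ∀ i, i ≤ n → A i = A 0 + i * (A 0 - 1) := by
    intro i
    induction i using Nat.strong_induction_on with
    | _ i ih =>
      intro hle
      rcases i with _ | i
      · simp
      rcases i with _ | t
      · have h0 := heq 0 hn
        norm_num at h0
        push_cast
        linarith
      · have e1 := heq (t+1) (by omega)
        have hne : (t+1 : ℕ) ≠ 0 := by omega
        simp only [hne, if_false, Nat.add_sub_cancel] at e1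
        have ht : A t = A 0 + t * (A 0 - 1) := ih t (by omega) (by omega)
        have ht1 := ih (t+1) (by omega) (by omega)
        push_cast at ht ht1 ⊢
        linarith
  have hn0 : A n = 0 := hA n le_rfl
  have hQ := Q n le_rfl
  rw [hn0] at hQ
  have hpos : (n : ℝ) + 1 ≠ 0 := by positivity
  rw [eq_div_iff hpos]
  ring_nf
  ring_nf at hQ
  linarith

/-- Pullback self-intersection formula in the Du Val `A_k`-chain case: if the
Gram matrix of the vectors `e j i` is block diagonal with `A_{k_j}` blocks,
`ct` pairs to `1` with the first vector of each chain and to `0` with all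
other `e j i`, and `c = ct + Σ a_{ji} e_{ji}` is orthogonal to all `e j i`,
then `B(c, c) = B(ct, ct) + Σ_j k_j/(k_j + 1)`. -/
theorem pullback_self_intersection_Ak {V : Type*} [AddCommGroup V] [Module ℝ V]
    (B : V →ₗ[ℝ] V →ₗ[ℝ] ℝ) (hB : ∀ x y, B x y = B y x)
    (m : ℕ) (k : Fin m → ℕ) (hk : ∀ j, 0 < k j)
    (e : (j : Fin m) → Fin (k j) → V)
    (hdiag : ∀ j i, B (e j i) (e j i) = -2)
    (hconsec : ∀ j (i i' : Fin (k j)),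
      ((i : ℕ) + 1 = (i' : ℕ) ∨ (i' : ℕ) + 1 = (i : ℕ)) → B (e j i) (e j i') = 1)
    (hfar : ∀ j (i i' : Fin (k j)), i ≠ i' →
      ¬((i : ℕ) + 1 = (i' : ℕ) ∨ (i' : ℕ) + 1 = (i : ℕ)) → B (e j i) (e j i') = 0)
    (hcross : ∀ j j' (i : Fin (k j)) (i' : Fin (k j')), j ≠ j' →
      B (e j i) (e j' i') = 0)
    (ct : V)
    (hfirst : ∀ j, B ct (e j ⟨0, hk j⟩) = 1)
    (hrest : ∀ j (i : Fin (k j)), (i : ℕ) ≠ 0 → B ct (e j i) = 0)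
    (a : (j : Fin m) → Fin (k j) → ℝ)
    (c : V) (hc : c = ct + ∑ j, ∑ i, a j i • e j i)
    (horth : ∀ j (i : Fin (k j)), B c (e j i) = 0) :
    B c c = B ct ct + ∑ j, (k j : ℝ) / (k j + 1) := by
  -- expansion in the second slot
  have key : ∀ v, B v c = B v ct + ∑ j, ∑ i, a j i * B v (e j i) := by
    intro v
    rw [hc]
    simp [map_add, map_sum, map_smul, smul_eq_mul]
  -- the extended coefficient function
  set A : (j : Fin m) → ℕ → ℝ := fun j i => if h : i < k j then a j ⟨i, h⟩ else 0 with hAdef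
  have hA0 : ∀ j i, k j ≤ i → A j i = 0 := by
    intro j i h
    simp only [hAdef]
    rw [dif_neg (by omega)]
  have hAval : ∀ j (i : Fin (k j)), A j i = a j i := by
    intro j i
    simp only [hAdef]
    rw [dif_pos i.isLt]
  -- Gram values as an if-expression
  have Bval : ∀ j (i i' : Fin (k j)), B (e j i) (e j i') =
      (if (i' : ℕ) = (i : ℕ) then (-2:ℝ)
        else if ((i:ℕ) + 1 = (i':ℕ) ∨ (i':ℕ) + 1 = (i:ℕ)) then 1 else 0) := by
    intro j i i'
    by_cases h1 : (i' : ℕ) = (i : ℕ)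
    · have : i' = i := Fin.ext h1
      rw [this]
      simp [hdiag j i]
    · rw [if_neg h1]
      by_cases h2 : ((i:ℕ) + 1 = (i':ℕ) ∨ (i':ℕ) + 1 = (i:ℕ))
      · rw [if_pos h2, hconsec j i i' h2]
      · rw [if_neg h2, hfar j i i' (fun h => h1 (by rw [h])) h2]
  -- value of B ct on chain vectors
  have Bct : ∀ j (i : Fin (k j)), B ct (e j i) = if (i : ℕ) = 0 then 1 else 0 := by
    intro j i
    by_cases h : (i : ℕ) = 0
    · have : i = ⟨0, hk j⟩ := Fin.ext h
      rw [this, if_pos rfl, hfirst]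
    · rw [if_neg h, hrest j i h]
  -- chain equations
  have heq : ∀ j (i : ℕ), i < k j →
      (if i = 0 then (1:ℝ) else 0) +
        ((if i = 0 then 0 else A j (i-1)) - 2 * A j i + A j (i+1)) = 0 := by
    intro j i hi
    have h0 := horth j ⟨i, hi⟩
    rw [hB] at h0
    rw [key (e j ⟨i, hi⟩)] at h0
    -- kill the cross-chain terms
    have houter : (∑ j', ∑ i', a j' i' * B (e j ⟨i, hi⟩) (e j' i'))
        = ∑ i', a j i' * B (e j ⟨i, hi⟩) (e j i') := by
      rw [Finset.sum_eq_single j]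
      · intro j' _ hne
        have : ∀ i' : Fin (k j'), a j' i' * B (e j ⟨i, hi⟩) (e j' i') = 0 := by
          intro i'
          rw [hcross j j' ⟨i, hi⟩ i' (Ne.symm hne), mul_zero]
        simp [this]
      · intro h; exact absurd (Finset.mem_univ j) h
    rw [houter] at h0
    have hsum : (∑ i' : Fin (k j), a j i' * B (e j ⟨i, hi⟩) (e j i'))
        = ∑ i' ∈ Finset.range (k j), A j i' *
            (if i' = i then (-2:ℝ) else if (i + 1 = i' ∨ i' + 1 = i) then 1 else 0) := by
      rw [← Fin.sum_univ_eq_sum_range (fun i' => A j i' *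
            (if i' = i then (-2:ℝ) else if (i + 1 = i' ∨ i' + 1 = i) then 1 else 0)) (k j)]
      apply Finset.sum_congr rfl
      intro i' _
      rw [hAval, Bval]
    rw [hsum, tri_sum (k j) (A j) (hA0 j) i hi] at h0
    rw [hB (e j ⟨i, hi⟩) ct, Bct j ⟨i, hi⟩] at h0
    simpa using h0
  -- solve each chain
  have ha0 : ∀ j, a j ⟨0, hk j⟩ = (k j : ℝ) / (k j + 1) := by
    intro j
    have := chain_solve (k j) (hk j) (A j) (hA0 j) (heq j)
    rwa [show A j 0 = a j ⟨0, hk j⟩ by rw [← hAval j ⟨0, hk j⟩]] at this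
  -- final computation
  have h1 : B c c = B c ct := by
    rw [key c]
    simp [horth]
  have h2 : B c ct = B ct ct + ∑ j, a j ⟨0, hk j⟩ := by
    rw [hB c ct, key ct]
    congr 1
    apply Finset.sum_congr rfl
    intro j _
    rw [Finset.sum_eq_single (⟨0, hk j⟩ : Fin (k j))]
    · rw [hfirst, mul_one]
    · intro i _ hne
      have : (i : ℕ) ≠ 0 := fun h => hne (Fin.ext h)
      rw [hrest j i this, mul_zero]
    · intro h; exact absurd (Finset.mem_univ _) h
  rw [h1, h2]
  congr 1
  exact Finset.sum_congr rfl (fun j _ => ha0 j)
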